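/- Let n and m be positive integers, let A be an n×n real matrix, B an m×n real matrix, and W an m×m real matrix. Define the (n+m)×(n+m) block matrices K = [[A, Bᵀ],[B, 0]] and K(W) = [[A + BᵀWB, Bᵀ],[B, 0]]. If K and K(W) are both invertible, then K⁻¹ = K(W)⁻¹ + [[0, 0],[0, W]], where [[0,0],[0,W]] denotes the (n+m)×(n+m) block matrix whose only nonzero block is W in the (2,2)-position. -/
import Mathlib


open Matrix

/-- If `K = [[A, Bᵀ],[B, 0]]` and `K(W) = [[A + BᵀWB, Bᵀ],[B, 0]]` are both
invertible, then `K⁻¹ = K(W)⁻¹ + [[0,0],[0,W]]`. -/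
theorem saddle_inverse_augmented {n m : ℕ} (hn : 0 < n) (hm : 0 < m)
    (A : Matrix (Fin n) (Fin n) ℝ) (B : Matrix (Fin m) (Fin n) ℝ)
    (W : Matrix (Fin m) (Fin m) ℝ)
    (hK : IsUnit (Matrix.fromBlocks A Bᵀ B 0))
    (hKW : IsUnit (Matrix.fromBlocks (A + Bᵀ * W * B) Bᵀ B 0)) :
    (Matrix.fromBlocks A Bᵀ B 0)⁻¹ =
      (Matrix.fromBlocks (A + Bᵀ * W * B) Bᵀ B 0)⁻¹ + Matrix.fromBlocks 0 0 0 W := by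
  set K : Matrix (Fin n ⊕ Fin m) (Fin n ⊕ Fin m) ℝ := Matrix.fromBlocks A Bᵀ B 0 with hKdef
  set E : Matrix (Fin n ⊕ Fin m) (Fin n ⊕ Fin m) ℝ := Matrix.fromBlocks 0 0 0 W with hEdef
  have hKWeq : Matrix.fromBlocks (A + Bᵀ * W * B) Bᵀ B 0 = K + K * E * K := by
    simp [hKdef, hEdef, Matrix.fromBlocks_multiply, Matrix.fromBlocks_add,
      Matrix.mul_assoc]
  have hEKE : E * K * E = 0 := by
    simp [hKdef, hEdef, Matrix.fromBlocks_multiply]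
  have hKinv : K * K⁻¹ = 1 :=
    Matrix.mul_nonsing_inv K ((Matrix.isUnit_iff_isUnit_det K).mp hK)
  have hright : (K + K * E * K) * (K⁻¹ - E) = 1 := by
    have h1 : K * E * K * E = 0 := by
      calc K * E * K * E = K * (E * K * E) := by simp only [Matrix.mul_assoc]
        _ = 0 := by rw [hEKE, mul_zero]
    have h2 : K * E * K * K⁻¹ = K * E := by
      rw [Matrix.mul_assoc (K * E) K K⁻¹, hKinv, mul_one]
    rw [add_mul, mul_sub, mul_sub, hKinv, h1, h2, sub_zero]
    abel
  have hinv : (Matrix.fromBlocks (A + Bᵀ * W * B) Bᵀ B 0)⁻¹ = K⁻¹ - E := by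
    apply Matrix.inv_eq_right_inv
    rw [hKWeq]; exact hright
  rw [hinv, sub_add_cancel]
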